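/- Let G be a finite group, N a normal subgroup of G, and C a subgroup of G such that G is the internal semidirect product N ⋊ C (i.e. G = NC and N ∩ C = 1). Let X ≤ C. Then the number of G-conjugates of C that contain X equals the index (C_N(X) : C_N(C)). -/

import Mathlib

open Subgroup Pointwise

section Aux

variable {G : Type*} [Group G]

/-- conj composition on maps -/
lemma conj_map_mul (C : Subgroup G) (a b : G) :
    C.map (MulAut.conj (a * b)).toMonoidHom
      = (C.map (MulAut.conj b).toMonoidHom).map (MulAut.conj a).toMonoidHom := by
  rw [Subgroup.map_map]
  congr 1
  ext x
  simp [MulAut.conj, mul_assoc]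

lemma conj_map_self (C : Subgroup G) {c : G} (hc : c ∈ C) :
    C.map (MulAut.conj c).toMonoidHom = C := by
  ext x
  simp only [Subgroup.mem_map, MulEquiv.toMonoidHom_eq_coe, MonoidHom.coe_coe,
    MulAut.conj_apply]
  constructor
  · rintro ⟨y, hy, rfl⟩
    exact C.mul_mem (C.mul_mem hc hy) (C.inv_mem hc)
  · intro hx
    exact ⟨c⁻¹ * x * c, C.mul_mem (C.mul_mem (C.inv_mem hc) hx) hc, by group⟩

lemma aux_le_conj (N C X : Subgroup G) [N.Normal] (hNC' : N ⊓ C = ⊥) (hX : X ≤ C)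
    {n : G} (hn : n ∈ N) :
    X ≤ C.map (MulAut.conj n).toMonoidHom ↔ n ∈ Subgroup.centralizer (X : Set G) := by
  constructor
  · intro h
    rw [Subgroup.mem_centralizer_iff]
    intro x hx
    obtain ⟨c, hc, hcx⟩ := h hx
    simp only [MulEquiv.toMonoidHom_eq_coe, MonoidHom.coe_coe, MulAut.conj_apply] at hcx
    -- hcx : n * c * n⁻¹ = x
    have hceq : c = n⁻¹ * x * n := by
      rw [← hcx]; group
    have h1 : x⁻¹ * c ∈ C := C.mul_mem (C.inv_mem (hX hx)) hc
    have h2 : x⁻¹ * c ∈ N := by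
      have he : x⁻¹ * c = (x⁻¹ * n⁻¹ * x) * n := by rw [hceq]; group
      rw [he]
      exact N.mul_mem (Subgroup.Normal.conj_mem' ‹N.Normal› n⁻¹ (N.inv_mem hn) x) hn
    have h3 : x⁻¹ * c = 1 := by
      have hm : x⁻¹ * c ∈ N ⊓ C := Subgroup.mem_inf.mpr ⟨h2, h1⟩
      rwa [hNC', Subgroup.mem_bot] at hm
    have hcx2 : c = x := by
      have := congrArg (x * ·) h3
      simpa [mul_assoc] using this
    rw [hcx2] at hcx
    calc x * n = (n * x * n⁻¹) * n := by rw [hcx]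
      _ = n * x := by group
  · intro hcen x hx
    refine ⟨x, hX hx, ?_⟩
    have hc := Subgroup.mem_centralizer_iff.mp hcen x hx
    simp only [MulEquiv.toMonoidHom_eq_coe, MonoidHom.coe_coe, MulAut.conj_apply]
    rw [← hc]; group

lemma aux_conj_eq (N C : Subgroup G) [N.Normal] (hNC' : N ⊓ C = ⊥)
    {n : G} (hn : n ∈ N) :
    C.map (MulAut.conj n).toMonoidHom = C ↔ n ∈ Subgroup.centralizer (C : Set G) := by
  constructor
  · intro h
    rw [Subgroup.mem_centralizer_iff]
    intro c hc
    have hmem : n * c * n⁻¹ ∈ C := by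
      rw [← h]
      refine ⟨c, hc, ?_⟩
      simp [MulAut.conj_apply]
    have h1 : (n * c * n⁻¹) * c⁻¹ ∈ C := C.mul_mem hmem (C.inv_mem hc)
    have h2 : (n * c * n⁻¹) * c⁻¹ ∈ N := by
      have he : (n * c * n⁻¹) * c⁻¹ = n * (c * n⁻¹ * c⁻¹) := by group
      rw [he]
      exact N.mul_mem hn (Subgroup.Normal.conj_mem ‹N.Normal› n⁻¹ (N.inv_mem hn) c)
    have h3 : (n * c * n⁻¹) * c⁻¹ = 1 := by
      have hm : (n * c * n⁻¹) * c⁻¹ ∈ N ⊓ C := Subgroup.mem_inf.mpr ⟨h2, h1⟩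
      rwa [hNC', Subgroup.mem_bot] at hm
    have h4 : n * c * n⁻¹ = c := by
      have := congrArg (· * c) h3
      simpa [mul_assoc] using this
    have hfin : c * n = (n * c * n⁻¹) * n := by rw [h4]
    rw [hfin]; group
  · intro hcen
    ext x
    simp only [Subgroup.mem_map, MulEquiv.toMonoidHom_eq_coe, MonoidHom.coe_coe,
      MulAut.conj_apply]
    constructor
    · rintro ⟨c, hc, rfl⟩
      have hc2 := Subgroup.mem_centralizer_iff.mp hcen c hc
      have he : n * c * n⁻¹ = c := by rw [← hc2]; group
      rwa [he]
    · intro hx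
      refine ⟨x, hx, ?_⟩
      have hc2 := Subgroup.mem_centralizer_iff.mp hcen x hx
      rw [← hc2]; group

end Aux

/-- If `G = N ⋊ C` (internally: `N ⊴ G`, `N ⊔ C = ⊤`, `N ⊓ C = ⊥`)
and `X ≤ C`, then the number of `G`-conjugates of `C` containing `X` equals the
index `(C_N(X) : C_N(C))`. -/
theorem stmt_1 {G : Type*} [Group G] [Finite G] (N C X : Subgroup G)
    [N.Normal] (hNC : N ⊔ C = ⊤) (hNC' : N ⊓ C = ⊥) (hX : X ≤ C) :
    Nat.card {D : Subgroup G //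
        (∃ g : G, D = C.map (MulAut.conj g).toMonoidHom) ∧ X ≤ D} =
      (Subgroup.centralizer (C : Set G) ⊓ N).relIndex
        (Subgroup.centralizer (X : Set G) ⊓ N) := by
  classical
  set Cx := Subgroup.centralizer (X : Set G) with hCx
  set Cc := Subgroup.centralizer (C : Set G) with hCc
  set K : Subgroup G := Cx ⊓ N with hK
  set L : Subgroup G := Cc ⊓ N with hL
  have hLK : L ≤ K :=
    inf_le_inf_right N (Subgroup.centralizer_le (SetLike.coe_subset_coe.mpr hX))
  -- the map from K to conjugates containing X
  have hmemK : ∀ n : K, (n : G) ∈ Cx ∧ (n : G) ∈ N := fun n => Subgroup.mem_inf.mp n.2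
  let φ : K → {D : Subgroup G //
      (∃ g : G, D = C.map (MulAut.conj g).toMonoidHom) ∧ X ≤ D} :=
    fun n => ⟨C.map (MulAut.conj (n : G)).toMonoidHom, ⟨n, rfl⟩,
      (aux_le_conj N C X hNC' hX (hmemK n).2).mpr (hmemK n).1⟩
  have hφ : ∀ n₁ n₂ : K, (n₁ : G)⁻¹ * n₂ ∈ L → φ n₁ = φ n₂ := by
    intro n₁ n₂ h
    obtain ⟨hcen, hN⟩ := Subgroup.mem_inf.mp h
    have key : C.map (MulAut.conj ((n₁ : G)⁻¹ * n₂)).toMonoidHom = C :=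
      (aux_conj_eq N C hNC' hN).mpr hcen
    have : C.map (MulAut.conj (n₂ : G)).toMonoidHom
        = C.map (MulAut.conj (n₁ : G)).toMonoidHom := by
      have h2 : (n₂ : G) = (n₁ : G) * ((n₁ : G)⁻¹ * n₂) := by group
      rw [h2, conj_map_mul, key]
    exact Subtype.ext this.symm
  let f : (K ⧸ L.subgroupOf K) → {D : Subgroup G //
      (∃ g : G, D = C.map (MulAut.conj g).toMonoidHom) ∧ X ≤ D} :=
    Quotient.lift φ (by
      intro a b hab
      have := (QuotientGroup.leftRel_apply).mp hab
      exact hφ a b this)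
  have hinj : Function.Injective f := by
    intro a b
    induction a using Quotient.inductionOn with | h a =>
    induction b using Quotient.inductionOn with | h b =>
    intro hab
    have heq : C.map (MulAut.conj (a : G)).toMonoidHom
        = C.map (MulAut.conj (b : G)).toMonoidHom := congrArg Subtype.val hab
    refine Quotient.sound (QuotientGroup.leftRel_apply.mpr ?_)
    have hmemN : (a : G)⁻¹ * b ∈ N := N.mul_mem (N.inv_mem (hmemK a).2) (hmemK b).2
    have key : C.map (MulAut.conj ((a : G)⁻¹ * b)).toMonoidHom = C := by
      have h2 : C.map (MulAut.conj (b : G)).toMonoidHom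
          = (C.map (MulAut.conj ((a : G)⁻¹ * (b : G))).toMonoidHom).map
              (MulAut.conj (a : G)).toMonoidHom := by
        rw [← conj_map_mul]
        congr 1
        group
      rw [h2] at heq
      exact (Subgroup.map_injective (MulAut.conj (a : G)).injective heq).symm
    have hcen : (a : G)⁻¹ * b ∈ Cc := (aux_conj_eq N C hNC' hmemN).mp key
    exact Subgroup.mem_inf.mpr ⟨hcen, hmemN⟩
  have hsurj : Function.Surjective f := by
    rintro ⟨D, ⟨g, rfl⟩, hXD⟩
    have hg : g ∈ (⊤ : Subgroup G) := Subgroup.mem_top g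
    rw [← hNC] at hg
    have hg' : g ∈ ((N : Set G) * (C : Set G)) := by
      rw [← Subgroup.normal_mul]
      exact hg
    obtain ⟨n, hn, c, hc, hnc⟩ := hg'
    have hDeq : C.map (MulAut.conj g).toMonoidHom
        = C.map (MulAut.conj n).toMonoidHom := by
      rw [← hnc, conj_map_mul, conj_map_self C hc]
    have hXn : X ≤ C.map (MulAut.conj n).toMonoidHom := hDeq ▸ hXD
    have hnCx : n ∈ Cx := (aux_le_conj N C X hNC' hX hn).mp hXn
    refine ⟨QuotientGroup.mk ⟨n, Subgroup.mem_inf.mpr ⟨hnCx, hn⟩⟩, ?_⟩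
    exact Subtype.ext hDeq.symm
  have := Nat.card_congr (Equiv.ofBijective f ⟨hinj, hsurj⟩)
  rw [← this]
  rfl
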